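/- arXiv:1309.2350 — 4 statements merged into one kernel-verified Lean document; each statement's English description precedes it below -/
import Mathlib

section
/- Let m ≥ 1, let μ₀ ∈ ℝ^m lie in the probability simplex Δ_m with every entry strictly positive, and let z ∈ ℝ^m. Then the function F(x) = -⟨z, x⟩ + Σ_{j=1}^m x_j log(x_j / μ₀_j) attains a unique minimum over Δ_m, and its unique minimizer x* is given componentwise by x*_j = μ₀_j · exp(z_j) / (Σ_{j'=1}^m μ₀_{j'} · exp(z_{j'})). -/
/-- Termwise Gibbs inequality: for `a ≥ 0`, `b > 0`, `a ≠ b`,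
we have `a - b < a * log (a / b)`. -/
lemma aux_gibbs_strict {a b : ℝ} (ha : 0 ≤ a) (hb : 0 < b) (hab : a ≠ b) :
    a - b < a * Real.log (a / b) := by
  rcases eq_or_lt_of_le ha with h | h
  · simp [← h]
    linarith
  · have hba : 0 < b / a := div_pos hb h
    have hne : b / a ≠ 1 := by
      intro hh
      exact hab (((div_eq_one_iff_eq h.ne').mp hh)).symm
    have hlogineq := Real.log_lt_sub_one_of_pos hba hne
    have h1 : a * Real.log (b / a) < a * (b / a - 1) :=
      (mul_lt_mul_iff_right₀ h).mpr hlogineq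
    have h2 : a * (b / a) = b := by field_simp
    have hlog : Real.log (a / b) = - Real.log (b / a) := by
      rw [← Real.log_inv, inv_div]
    rw [hlog]
    nlinarith

/-- The function `F(x) = -⟨z, x⟩ + ∑ j, x j * log (x j / μ₀ j)` attains a
unique minimum over the probability simplex `Δ_m`, and its unique minimizer is
`x*_j = μ₀_j exp(z_j) / ∑_{j'} μ₀_{j'} exp(z_{j'})`. -/
theorem bayes_dual_averaging_unique_minimizer
    (m : ℕ) (hm : 1 ≤ m) (μ0 z : Fin m → ℝ)
    (hμ0 : μ0 ∈ stdSimplex ℝ (Fin m)) (hμ0pos : ∀ j, 0 < μ0 j)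
    (F : (Fin m → ℝ) → ℝ)
    (hF : ∀ x, F x = -(∑ j, z j * x j) + ∑ j, x j * Real.log (x j / μ0 j))
    (xstar : Fin m → ℝ)
    (hxstar : ∀ j, xstar j =
      μ0 j * Real.exp (z j) / ∑ j', μ0 j' * Real.exp (z j')) :
    xstar ∈ stdSimplex ℝ (Fin m) ∧
      ∀ x ∈ stdSimplex ℝ (Fin m), x ≠ xstar → F xstar < F x := by
  set Z : ℝ := ∑ j', μ0 j' * Real.exp (z j') with hZ
  have hZpos : 0 < Z :=
    Finset.sum_pos (fun j _ => mul_pos (hμ0pos j) (Real.exp_pos _))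
      ⟨⟨0, hm⟩, Finset.mem_univ _⟩
  have hxpos : ∀ j, 0 < xstar j := by
    intro j
    rw [hxstar]
    exact div_pos (mul_pos (hμ0pos j) (Real.exp_pos _)) hZpos
  have hxsum : ∑ j, xstar j = 1 := by
    simp only [hxstar]
    rw [← Finset.sum_div, div_eq_one_iff_eq hZpos.ne']
  have hmem : xstar ∈ stdSimplex ℝ (Fin m) := ⟨fun j => (hxpos j).le, hxsum⟩
  refine ⟨hmem, ?_⟩
  have key : ∀ x : Fin m → ℝ, x ∈ stdSimplex ℝ (Fin m) →
      ∑ j, x j * Real.log (x j / xstar j) = F x + Real.log Z := by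
    intro x hx
    have hterm : ∀ j, x j * Real.log (x j / xstar j)
        = -(z j * x j) + x j * Real.log (x j / μ0 j) + x j * Real.log Z := by
      intro j
      rcases eq_or_lt_of_le (hx.1 j) with h | h
      · simp [← h]
      · have h1 : xstar j ≠ 0 := (hxpos j).ne'
        rw [Real.log_div h.ne' h1, hxstar j,
          Real.log_div (mul_pos (hμ0pos j) (Real.exp_pos _)).ne' hZpos.ne',
          Real.log_mul (hμ0pos j).ne' (Real.exp_ne_zero _), Real.log_exp,
          Real.log_div h.ne' (hμ0pos j).ne']
        ring
    calc ∑ j, x j * Real.log (x j / xstar j)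
        = ∑ j, (-(z j * x j) + x j * Real.log (x j / μ0 j) + x j * Real.log Z) :=
          Finset.sum_congr rfl (fun j _ => hterm j)
      _ = -(∑ j, z j * x j) + (∑ j, x j * Real.log (x j / μ0 j))
            + (∑ j, x j) * Real.log Z := by
          rw [Finset.sum_add_distrib, Finset.sum_add_distrib, ← Finset.sum_mul]
          simp
      _ = F x + Real.log Z := by rw [hx.2, hF]; ring
  have hFstar : F xstar = - Real.log Z := by
    have hk := key xstar hmem
    have : ∑ j, xstar j * Real.log (xstar j / xstar j) = 0 := by
      simp [div_self (hxpos _).ne']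
    linarith [hk, this]
  intro x hx hne
  have hkey := key x hx
  have hpos : 0 < ∑ j, x j * Real.log (x j / xstar j) := by
    have hle : ∀ j ∈ Finset.univ, x j - xstar j ≤ x j * Real.log (x j / xstar j) := by
      intro j _
      rcases eq_or_ne (x j) (xstar j) with h | h
      · rw [h, div_self (hxpos j).ne', Real.log_one]
        simp
      · exact (aux_gibbs_strict (hx.1 j) (hxpos j) h).le
    obtain ⟨j, hj⟩ : ∃ j, x j ≠ xstar j := Function.ne_iff.mp hne
    have hlt := Finset.sum_lt_sum hle
      ⟨j, Finset.mem_univ j, aux_gibbs_strict (hx.1 j) (hxpos j) hj⟩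
    have hsum0 : ∑ j, (x j - xstar j) = 0 := by
      rw [Finset.sum_sub_distrib, hx.2, hxsum]
      ring
    linarith
  linarith
end

section
/- Let (Ω, F, P) be a probability space and n ≥ 1. Let Y_{k,τ} : Ω → ℝ, for k ∈ {1,…,n} and τ ∈ ℕ, be an independent family of square-integrable random variables such that, for each fixed k, the variables Y_{k,τ} (τ ∈ ℕ) are identically distributed with mean m_k and variance v_k < ∞. Let A_{t,τ} : Ω → (n×n real matrices), for integers 0 ≤ τ < t, be random matrices such that: (i) the σ-algebra generated by the whole family (A_{t,τ}) is independent of the σ-algebra generated by the family (Y_{k,τ}); (ii) almost surely every A_{t,τ} is doubly stochastic; and (iii) almost surely, for every ε > 0 there exists N such that |(A_{t,τ})_{ik} - 1/n| ≤ ε for all i, k whenever t - τ ≥ N. Define Φ_{i,t} = (1/t) Σ_{τ=0}^{t-1} Σ_{k=1}^n (A_{t,τ})_{ik} · Y_{k,τ}. Then for each i ∈ {1,…,n}, Φ_{i,t} converges in probability, as t → ∞, to the constant (1/n) Σ_{k=1}^n m_k. -/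
open MeasureTheory ProbabilityTheory

abbrev sigA {Ω : Type*} [MeasurableSpace Ω] {n : ℕ}
    (A : ℕ → ℕ → Ω → Matrix (Fin n) (Fin n) ℝ) : MeasurableSpace Ω :=
  ⨆ (t : ℕ) (τ : ℕ) (i : Fin n) (k : Fin n),
    MeasurableSpace.comap (fun ω => A t τ ω i k) inferInstance

abbrev sigY {Ω : Type*} [MeasurableSpace Ω] {n : ℕ}
    (Y : Fin n → ℕ → Ω → ℝ) : MeasurableSpace Ω :=
  ⨆ (k : Fin n) (τ : ℕ), MeasurableSpace.comap (Y k τ) inferInstance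

lemma int_mul_of_L2 {Ω : Type*} [MeasureSpace Ω] {f g : Ω → ℝ} (hf : MemLp f 2 ℙ)
    (hg : MemLp g 2 ℙ) : Integrable (fun ω => f ω * g ω) ℙ :=
  memLp_one_iff_integrable.mp
    (hg.smul hf : MemLp (f • g) 1 ℙ)

set_option maxHeartbeats 1000000 in
/-- Let `Y_{k,τ}` be an independent family of square-integrable random
variables, identically distributed in `τ` for each fixed `k`, with mean `m_k` and
variance `v_k`. Let `A_{t,τ}` be random matrices, independent of the `Y`'s, almost surely
doubly stochastic, and almost surely converging entrywise to `1/n` as `t - τ → ∞`. Then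
`Φ_{i,t} = (1/t) ∑_{τ<t} ∑_k (A_{t,τ})_{ik} Y_{k,τ}` converges in probability to
`(1/n) ∑_k m_k`. -/
theorem aggregated_loglikelihood_converges_in_probability
    {Ω : Type*} [MeasureSpace Ω] [IsProbabilityMeasure (ℙ : Measure Ω)]
    (n : ℕ) (hn : 1 ≤ n)
    (Y : Fin n → ℕ → Ω → ℝ)
    (hYmeas : ∀ k τ, Measurable (Y k τ))
    (hYL2 : ∀ k τ, MemLp (Y k τ) 2 ℙ)
    (hYindep : iIndepFun
      (fun p : Fin n × ℕ => Y p.1 p.2) ℙ)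
    (hYid : ∀ k τ τ', IdentDistrib (Y k τ) (Y k τ') ℙ ℙ)
    (meanY v : Fin n → ℝ)
    (hmean : ∀ k τ, ∫ ω, Y k τ ω ∂ℙ = meanY k)
    (hvar : ∀ k τ, variance (Y k τ) ℙ = v k)
    (A : ℕ → ℕ → Ω → Matrix (Fin n) (Fin n) ℝ)
    (hAmeas : ∀ t τ i k, Measurable (fun ω => A t τ ω i k))
    (hindepAY : Indep
      (⨆ (t : ℕ) (τ : ℕ) (i : Fin n) (k : Fin n),
        MeasurableSpace.comap (fun ω => A t τ ω i k) inferInstance)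
      (⨆ (k : Fin n) (τ : ℕ), MeasurableSpace.comap (Y k τ) inferInstance) ℙ)
    (hDS : ∀ᵐ ω ∂ℙ, ∀ t τ, τ < t →
      (∀ i k, 0 ≤ A t τ ω i k) ∧ (∀ i, ∑ k, A t τ ω i k = 1) ∧
        (∀ k, ∑ i, A t τ ω i k = 1))
    (hconv : ∀ᵐ ω ∂ℙ, ∀ ε > (0 : ℝ), ∃ N : ℕ, ∀ t τ, τ < t → N ≤ t - τ →
      ∀ i k, |A t τ ω i k - 1 / (n : ℝ)| ≤ ε)
    (i : Fin n) :
    ∀ ε > (0 : ℝ), Filter.Tendsto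
      (fun t : ℕ => ℙ {ω |
        ε ≤ |(1 / (t : ℝ)) * (∑ τ ∈ Finset.range t, ∑ k, A t τ ω i k * Y k τ ω) -
          (1 / (n : ℝ)) * ∑ k, meanY k|})
      Filter.atTop (nhds 0) := by
  classical
  intro ε hε
  set c : ℝ := (1 / (n : ℝ)) * ∑ k, meanY k with hc
  set W : Fin n → ℕ → Ω → ℝ := fun k τ ω => Y k τ ω - meanY k with hWdef
  -- basic facts about W
  have hWL2 : ∀ k τ, MemLp (W k τ) 2 ℙ := fun k τ => (hYL2 k τ).sub (memLp_const _)
  have hWmeas : ∀ k τ, Measurable (W k τ) := fun k τ => (hYmeas k τ).sub measurable_const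
  have hWint : ∀ k τ, Integrable (W k τ) ℙ := fun k τ => (hWL2 k τ).integrable one_le_two
  have hYint : ∀ k τ, Integrable (Y k τ) ℙ := fun k τ => (hYL2 k τ).integrable one_le_two
  have hWmean : ∀ k τ, ∫ ω, W k τ ω ∂ℙ = 0 := by
    intro k τ
    rw [hWdef]
    rw [integral_sub (hYint k τ) (integrable_const _), hmean, integral_const]
    simp
  have hvnonneg : ∀ k, 0 ≤ v k := fun k => (hvar k 0) ▸ variance_nonneg _ _
  have hWsq : ∀ k τ, ∫ ω, (W k τ ω) ^ 2 ∂ℙ = v k := by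
    intro k τ
    have h1 : variance (Y k τ) ℙ = ∫ ω, (Y k τ ω - ∫ x, Y k τ x ∂ℙ) ^ 2 ∂ℙ := by
      rw [variance_eq_integral (hYL2 k τ).aestronglyMeasurable.aemeasurable]
    rw [← hvar k τ, h1, hmean k τ]
  -- measurability wrt the sub-σ-algebras
  have hAmA : ∀ t τ k, Measurable[sigA A] (fun ω => A t τ ω i k) := by
    intro t τ k
    rw [measurable_iff_comap_le]
    exact le_iSup_of_le t (le_iSup_of_le τ (le_iSup_of_le i (le_iSup_of_le k le_rfl)))
  have hYmY : ∀ k τ, Measurable[sigY Y] (Y k τ) := by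
    intro k τ
    rw [measurable_iff_comap_le]
    exact le_iSup_of_le k (le_iSup_of_le τ le_rfl)
  have hWmY : ∀ k τ, Measurable[sigY Y] (W k τ) := fun k τ => (hYmY k τ).sub measurable_const
  have hkey : ∀ {f g : Ω → ℝ}, Measurable[sigA A] f → Measurable[sigY Y] g →
      IndepFun f g ℙ := by
    intro f g hf hg
    rw [indepFun_iff_measure_inter_preimage_eq_mul]
    intro s t hs ht
    exact (Indep_iff _ _ _).mp hindepAY _ _ (hf hs) (hg ht)
  -- a.e. bounds on A entries
  have hA1 : ∀ᵐ ω ∂ℙ, ∀ t τ, τ < t → ∀ k, 0 ≤ A t τ ω i k ∧ A t τ ω i k ≤ 1 := by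
    filter_upwards [hDS] with ω h t τ hτ k
    obtain ⟨h0, hrow, -⟩ := h t τ hτ
    refine ⟨h0 i k, ?_⟩
    calc A t τ ω i k ≤ ∑ k', A t τ ω i k' :=
          Finset.single_le_sum (fun k' _ => h0 i k') (Finset.mem_univ k)
      _ = 1 := hrow i
  -- definition of the two pieces
  set S : ℕ → Ω → ℝ := fun t ω => ∑ τ ∈ Finset.range t, ∑ k, A t τ ω i k * W k τ ω with hSdef
  set Z : ℕ → Ω → ℝ := fun t ω => (1 / (t : ℝ)) * S t ω with hZdef
  set D : ℕ → Ω → ℝ := fun t ω =>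
    (1 / (t : ℝ)) * (∑ τ ∈ Finset.range t, ∑ k, A t τ ω i k * meanY k) - c with hDdef
  set V : ℝ := ∑ k, v k with hVdef
  have hVnonneg : 0 ≤ V := Finset.sum_nonneg fun k _ => hvnonneg k
  -- decomposition
  have hdecomp : ∀ (t : ℕ) (ω : Ω),
      (1 / (t : ℝ)) * (∑ τ ∈ Finset.range t, ∑ k, A t τ ω i k * Y k τ ω) - c
        = Z t ω + D t ω := by
    intro t ω
    have h1 : ∀ τ, (∑ k, A t τ ω i k * Y k τ ω)
        = (∑ k, A t τ ω i k * W k τ ω) + ∑ k, A t τ ω i k * meanY k := by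
      intro τ
      rw [← Finset.sum_add_distrib]
      refine Finset.sum_congr rfl fun k _ => ?_
      simp [hWdef]; ring
    simp only [hZdef, hDdef, hSdef]
    rw [Finset.sum_congr rfl fun τ _ => h1 τ, Finset.sum_add_distrib]
    ring
  -- == Part 1 : the Z part ==
  have hZbound : ∀ t : ℕ, 1 ≤ t →
      ℙ {ω | ε / 2 ≤ |Z t ω|} ≤ ENNReal.ofReal ((V / (ε / 2) ^ 2) / t) := by
    intro t ht
    have htR : (0 : ℝ) < t := by exact_mod_cast ht
    set P := Finset.range t ×ˢ (Finset.univ : Finset (Fin n)) with hPdef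
    set F : ℕ × Fin n → Ω → ℝ := fun p ω => A t p.1 ω i p.2 * W p.2 p.1 ω with hFdef
    have hmemP : ∀ p : ℕ × Fin n, p ∈ P → p.1 < t := by
      intro p hp
      rw [hPdef, Finset.mem_product] at hp
      exact Finset.mem_range.mp hp.1
    have hSP : ∀ ω, S t ω = ∑ p ∈ P, F p ω := by
      intro ω
      rw [hSdef, hPdef, hFdef, Finset.sum_product]
    have hsq : ∀ ω, (S t ω) ^ 2 = ∑ p ∈ P, ∑ q ∈ P, F p ω * F q ω := by
      intro ω
      rw [hSP ω, sq, Finset.sum_mul_sum]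
    have heqFF : ∀ p q : ℕ × Fin n, (fun ω => F p ω * F q ω)
        = fun ω => (A t p.1 ω i p.2 * A t q.1 ω i q.2) * (W p.2 p.1 ω * W q.2 q.1 ω) := by
      intro p q
      funext ω
      simp only [hFdef]
      ring
    have hAbdd : ∀ p q : ℕ × Fin n, p.1 < t → q.1 < t →
        ∀ᵐ ω ∂ℙ, ‖A t p.1 ω i p.2 * A t q.1 ω i q.2‖ ≤ 1 := by
      intro p q hp hq
      filter_upwards [hA1] with ω hA
      obtain ⟨ha0, ha1⟩ := hA t p.1 hp p.2
      obtain ⟨hb0, hb1⟩ := hA t q.1 hq q.2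
      rw [Real.norm_eq_abs, abs_mul, abs_of_nonneg ha0, abs_of_nonneg hb0]
      exact mul_le_one₀ ha1 hb0 hb1
    have hFFint : ∀ p ∈ P, ∀ q ∈ P, Integrable (fun ω => F p ω * F q ω) ℙ := by
      intro p hp q hq
      rw [heqFF p q]
      exact (int_mul_of_L2 (hWL2 p.2 p.1) (hWL2 q.2 q.1)).bdd_mul
        ((hAmeas t p.1 i p.2).mul (hAmeas t q.1 i q.2)).aestronglyMeasurable
        (hAbdd p q (hmemP p hp) (hmemP q hq))
    have hval : ∀ p ∈ P, ∀ q ∈ P, ∫ ω, F p ω * F q ω ∂ℙ =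
        (∫ ω, A t p.1 ω i p.2 * A t q.1 ω i q.2 ∂ℙ) *
          ∫ ω, W p.2 p.1 ω * W q.2 q.1 ω ∂ℙ := by
      intro p hp q hq
      rw [heqFF p q]
      have hIF : IndepFun (fun ω => A t p.1 ω i p.2 * A t q.1 ω i q.2)
          (fun ω => W p.2 p.1 ω * W q.2 q.1 ω) ℙ :=
        hkey (Measurable.mul (hAmA t p.1 p.2) (hAmA t q.1 q.2))
          (Measurable.mul (hWmY p.2 p.1) (hWmY q.2 q.1))
      exact hIF.integral_fun_mul_eq_mul_integral
        ((hAmeas t p.1 i p.2).mul (hAmeas t q.1 i q.2)).aestronglyMeasurable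
        ((hWmeas p.2 p.1).mul (hWmeas q.2 q.1)).aestronglyMeasurable
    have hoff : ∀ p q : ℕ × Fin n, p ≠ q → ∫ ω, W p.2 p.1 ω * W q.2 q.1 ω ∂ℙ = 0 := by
      intro p q hpq
      have hne : (p.2, p.1) ≠ (q.2, q.1) := by
        intro h
        apply hpq
        rw [Prod.ext_iff] at h ⊢
        exact ⟨h.2, h.1⟩
      have hYind : IndepFun (Y p.2 p.1) (Y q.2 q.1) ℙ :=
        hYindep.indepFun (i := (p.2, p.1)) (j := (q.2, q.1)) hne
      have hWind : IndepFun (W p.2 p.1) (W q.2 q.1) ℙ := by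
        have h2 := hYind.comp (φ := fun x => x - meanY p.2) (ψ := fun x => x - meanY q.2)
          (measurable_id.sub measurable_const) (measurable_id.sub measurable_const)
        exact h2
      have := hWind.integral_mul_eq_mul_integral (hWint p.2 p.1).1 (hWint q.2 q.1).1
      calc ∫ ω, W p.2 p.1 ω * W q.2 q.1 ω ∂ℙ
          = ∫ ω, (W p.2 p.1 * W q.2 q.1) ω ∂ℙ := rfl
        _ = (∫ ω, W p.2 p.1 ω ∂ℙ) * ∫ ω, W q.2 q.1 ω ∂ℙ := this
        _ = 0 := by rw [hWmean, hWmean, mul_zero]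
    have hdiagA : ∀ p : ℕ × Fin n, p.1 < t →
        ∫ ω, A t p.1 ω i p.2 * A t p.1 ω i p.2 ∂ℙ ≤ 1 := by
      intro p hp
      have hint : Integrable (fun ω => A t p.1 ω i p.2 * A t p.1 ω i p.2) ℙ := by
        refine Integrable.mono' (integrable_const 1)
          ((hAmeas t p.1 i p.2).mul (hAmeas t p.1 i p.2)).aestronglyMeasurable ?_
        exact hAbdd p p hp hp
      have hle : ∀ᵐ ω ∂ℙ, A t p.1 ω i p.2 * A t p.1 ω i p.2 ≤ 1 := by
        filter_upwards [hA1] with ω hA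
        obtain ⟨ha0, ha1⟩ := hA t p.1 hp p.2
        exact mul_le_one₀ ha1 ha0 ha1
      calc ∫ ω, A t p.1 ω i p.2 * A t p.1 ω i p.2 ∂ℙ
          ≤ ∫ _ω, (1 : ℝ) ∂ℙ := integral_mono_ae hint (integrable_const 1) hle
        _ = 1 := by simp
    have hWdiag : ∀ p : ℕ × Fin n, ∫ ω, W p.2 p.1 ω * W p.2 p.1 ω ∂ℙ = v p.2 := by
      intro p
      rw [← hWsq p.2 p.1]
      congr 1
      funext ω
      ring
    have hSint : Integrable (fun ω => (S t ω) ^ 2) ℙ := by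
      have heq : (fun ω => (S t ω) ^ 2) = fun ω => ∑ p ∈ P, ∑ q ∈ P, F p ω * F q ω :=
        funext hsq
      rw [heq]
      exact integrable_finset_sum _ fun p hp =>
        integrable_finset_sum _ fun q hq => hFFint p hp q hq
    have hSval : ∫ ω, (S t ω) ^ 2 ∂ℙ ≤ t * V := by
      have h1 : ∫ ω, (S t ω) ^ 2 ∂ℙ = ∑ p ∈ P, ∑ q ∈ P, ∫ ω, F p ω * F q ω ∂ℙ := by
        rw [funext hsq, integral_finset_sum _ fun p hp =>
          integrable_finset_sum _ fun q hq => hFFint p hp q hq]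
        exact Finset.sum_congr rfl fun p hp =>
          integral_finset_sum _ fun q hq => hFFint p hp q hq
      rw [h1]
      have h2 : ∀ p ∈ P, ∑ q ∈ P, ∫ ω, F p ω * F q ω ∂ℙ ≤ v p.2 := by
        intro p hp
        rw [Finset.sum_eq_single p]
        · rw [hval p hp p hp, hWdiag p]
          exact mul_le_of_le_one_left (hvnonneg p.2) (hdiagA p (hmemP p hp))
        · intro q hq hqp
          rw [hval p hp q hq, hoff p q (Ne.symm hqp), mul_zero]
        · intro hpP
          exact absurd hp hpP
      calc ∑ p ∈ P, ∑ q ∈ P, ∫ ω, F p ω * F q ω ∂ℙ ≤ ∑ p ∈ P, v p.2 :=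
            Finset.sum_le_sum h2
        _ = t * V := by
            rw [hPdef, Finset.sum_product]
            simp [hVdef, Finset.sum_const, Finset.card_range, nsmul_eq_mul, mul_comm]
    -- Markov / Chebyshev step
    set b : ℝ := (t : ℝ) * (ε / 2) with hbdef
    have hb : 0 < b := by positivity
    have hsubset : {ω | ε / 2 ≤ |Z t ω|} ⊆ {ω | b ^ 2 ≤ (S t ω) ^ 2} := by
      intro ω hω
      simp only [Set.mem_setOf_eq] at hω ⊢
      have h1 : b ≤ |S t ω| := by
        rw [hZdef] at hω
        simp only at hω
        rw [abs_mul, abs_of_nonneg (by positivity : (0:ℝ) ≤ 1 / (t:ℝ))] at hω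
        rw [hbdef]
        calc (t : ℝ) * (ε / 2) ≤ (t : ℝ) * (1 / (t:ℝ) * |S t ω|) :=
              mul_le_mul_of_nonneg_left hω (le_of_lt htR)
          _ = |S t ω| := by field_simp
      calc b ^ 2 ≤ |S t ω| ^ 2 := by nlinarith [abs_nonneg (S t ω)]
        _ = (S t ω) ^ 2 := sq_abs _
    have hmarkov := mul_meas_ge_le_integral_of_nonneg (μ := ℙ)
      (f := fun ω => (S t ω) ^ 2) (Filter.Eventually.of_forall fun ω => sq_nonneg _)
      hSint (b ^ 2)
    have htoReal : (ℙ {ω | ε / 2 ≤ |Z t ω|}).toReal ≤ (V / (ε / 2) ^ 2) / t := by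
      have h1 : (ℙ {ω | ε / 2 ≤ |Z t ω|}).toReal ≤ (ℙ {ω | b ^ 2 ≤ (S t ω) ^ 2}).toReal :=
        ENNReal.toReal_mono (measure_ne_top _ _) (measure_mono hsubset)
      have h2 : (ℙ {ω | b ^ 2 ≤ (S t ω) ^ 2}).toReal ≤ (t * V) / b ^ 2 := by
        rw [le_div_iff₀ (by positivity)]
        calc (ℙ {ω | b ^ 2 ≤ (S t ω) ^ 2}).toReal * b ^ 2
            = b ^ 2 * (ℙ {ω | b ^ 2 ≤ (S t ω) ^ 2}).toReal := mul_comm _ _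
          _ ≤ ∫ ω, (S t ω) ^ 2 ∂ℙ := hmarkov
          _ ≤ t * V := hSval
      have h3 : (t : ℝ) * V / b ^ 2 = (V / (ε / 2) ^ 2) / t := by
        rw [hbdef]
        field_simp
      exact (h1.trans h2).trans (le_of_eq h3)
    rw [← ENNReal.ofReal_toReal (measure_ne_top ℙ _)]
    exact ENNReal.ofReal_le_ofReal htoReal
  have hZ0 : Filter.Tendsto (fun t => ℙ {ω | ε / 2 ≤ |Z t ω|}) Filter.atTop (nhds 0) := by
    have hb : Filter.Tendsto (fun t : ℕ => ENNReal.ofReal ((V / (ε / 2) ^ 2) / t))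
        Filter.atTop (nhds 0) := by
      have := ENNReal.tendsto_ofReal
        (tendsto_const_div_atTop_nhds_zero_nat (V / (ε / 2) ^ 2))
      simpa using this
    refine tendsto_of_tendsto_of_tendsto_of_le_of_le' tendsto_const_nhds hb
      (Filter.Eventually.of_forall fun t => zero_le) ?_
    filter_upwards [Filter.eventually_ge_atTop 1] with t ht
    exact hZbound t ht
  -- == Part 2 : the D part ==
  have hDae : ∀ᵐ ω ∂ℙ, Filter.Tendsto (fun t => D t ω) Filter.atTop (nhds 0) := by
    filter_upwards [hDS, hconv] with ω hds hcv
    set M : ℝ := ∑ k, |meanY k| with hMdef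
    have hM0 : 0 ≤ M := Finset.sum_nonneg fun k _ => abs_nonneg _
    rw [Metric.tendsto_atTop]
    intro ε' hε'
    obtain ⟨N, hN⟩ := hcv (ε' / (2 * (M + 1))) (by positivity)
    refine ⟨max 1 (Nat.ceil (4 * M * N / ε') + 1), fun t ht => ?_⟩
    have ht1 : 1 ≤ t := le_trans (le_max_left _ _) ht
    have htR : (0 : ℝ) < t := by exact_mod_cast Nat.lt_of_lt_of_le Nat.zero_lt_one ht1
    have htc : (Nat.ceil (4 * M * N / ε') + 1 : ℕ) ≤ t := le_trans (le_max_right _ _) ht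
    -- row bounds
    have hrow : ∀ τ, τ < t → |∑ k, A t τ ω i k * meanY k - c|
        ≤ ∑ k, |A t τ ω i k - 1 / (n : ℝ)| * |meanY k| := by
      intro τ hτ
      have heq : ∑ k, A t τ ω i k * meanY k - c
          = ∑ k, (A t τ ω i k - 1 / (n : ℝ)) * meanY k := by
        rw [hc, Finset.mul_sum, ← Finset.sum_sub_distrib]
        exact Finset.sum_congr rfl fun k _ => by ring
      rw [heq]
      refine (Finset.abs_sum_le_sum_abs _ _).trans (le_of_eq ?_)
      exact Finset.sum_congr rfl fun k _ => abs_mul _ _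
    have hgood : ∀ τ, τ < t → N ≤ t - τ → |∑ k, A t τ ω i k * meanY k - c|
        ≤ ε' / (2 * (M + 1)) * M := by
      intro τ hτ hNτ
      refine (hrow τ hτ).trans ?_
      rw [hMdef, Finset.mul_sum]
      exact Finset.sum_le_sum fun k _ =>
        mul_le_mul_of_nonneg_right (hN t τ hτ hNτ i k) (abs_nonneg _)
    have hbad : ∀ τ, τ < t → |∑ k, A t τ ω i k * meanY k - c| ≤ 2 * M := by
      intro τ hτ
      refine (hrow τ hτ).trans ?_
      have hAk : ∀ k : Fin n, |A t τ ω i k - 1 / (n : ℝ)| ≤ 2 := by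
        intro k
        obtain ⟨h0, hrowsum, -⟩ := hds t τ hτ
        have h1 : A t τ ω i k ≤ 1 := by
          calc A t τ ω i k ≤ ∑ k', A t τ ω i k' :=
                Finset.single_le_sum (fun k' _ => h0 i k') (Finset.mem_univ k)
            _ = 1 := hrowsum i
        have h2 : (0 : ℝ) ≤ 1 / (n : ℝ) := by positivity
        have h3 : (1 : ℝ) / (n : ℝ) ≤ 1 := by
          rw [div_le_one (by exact_mod_cast Nat.lt_of_lt_of_le Nat.zero_lt_one hn)]
          exact_mod_cast hn
        rw [abs_le]
        constructor <;> linarith [h0 i k]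
      calc ∑ k, |A t τ ω i k - 1 / (n : ℝ)| * |meanY k| ≤ ∑ k, 2 * |meanY k| :=
            Finset.sum_le_sum fun k _ =>
              mul_le_mul_of_nonneg_right (hAk k) (abs_nonneg _)
        _ = 2 * M := by rw [hMdef, Finset.mul_sum]
    -- rewrite D
    have htne : (t : ℝ) ≠ 0 := ne_of_gt htR
    have hDeq : D t ω = (1 / (t : ℝ)) *
        ∑ τ ∈ Finset.range t, (∑ k, A t τ ω i k * meanY k - c) := by
      rw [hDdef]
      simp only [Finset.sum_sub_distrib, Finset.sum_const, Finset.card_range, mul_sub,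
        nsmul_eq_mul]
      field_simp
    -- split the sum
    have hsplit : ∑ τ ∈ Finset.range t, |∑ k, A t τ ω i k * meanY k - c|
        ≤ t * (ε' / (2 * (M + 1)) * M) + N * (2 * M) := by
      rw [← Finset.sum_filter_add_sum_filter_not (Finset.range t)
        (fun τ => N ≤ t - τ) (fun τ => |∑ k, A t τ ω i k * meanY k - c|)]
      have hgB : ∑ τ ∈ (Finset.range t).filter (fun τ => N ≤ t - τ),
          |∑ k, A t τ ω i k * meanY k - c| ≤ t * (ε' / (2 * (M + 1)) * M) := by
        refine le_trans (Finset.sum_le_card_nsmul _ _ (ε' / (2 * (M + 1)) * M) ?_) ?_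
        · intro τ hτ
          rw [Finset.mem_filter, Finset.mem_range] at hτ
          exact hgood τ hτ.1 hτ.2
        · rw [nsmul_eq_mul]
          refine mul_le_mul_of_nonneg_right ?_ (by positivity)
          have := Finset.card_filter_le (Finset.range t) (fun τ => N ≤ t - τ)
          rw [Finset.card_range] at this
          exact_mod_cast this
      have hbB : ∑ τ ∈ (Finset.range t).filter (fun τ => ¬ N ≤ t - τ),
          |∑ k, A t τ ω i k * meanY k - c| ≤ N * (2 * M) := by
        refine le_trans (Finset.sum_le_card_nsmul _ _ (2 * M) ?_) ?_
        · intro τ hτ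
          rw [Finset.mem_filter, Finset.mem_range] at hτ
          exact hbad τ hτ.1
        · rw [nsmul_eq_mul]
          refine mul_le_mul_of_nonneg_right ?_ (by positivity)
          have hss : (Finset.range t).filter (fun τ => ¬ N ≤ t - τ)
              ⊆ Finset.Ico (t - N) t := by
            intro τ hτ
            rw [Finset.mem_filter, Finset.mem_range] at hτ
            rw [Finset.mem_Ico]
            omega
          have := Finset.card_le_card hss
          rw [Nat.card_Ico] at this
          have h2 : t - (t - N) ≤ N := by omega
          exact_mod_cast le_trans this h2
      linarith
    -- final numeric estimate
    rw [Real.dist_eq, sub_zero, hDeq]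
    have habs : |(1 / (t : ℝ)) * ∑ τ ∈ Finset.range t, (∑ k, A t τ ω i k * meanY k - c)|
        ≤ (1 / (t : ℝ)) * (t * (ε' / (2 * (M + 1)) * M) + N * (2 * M)) := by
      rw [abs_mul, abs_of_nonneg (by positivity : (0:ℝ) ≤ 1 / (t : ℝ))]
      exact mul_le_mul_of_nonneg_left
        ((Finset.abs_sum_le_sum_abs _ _).trans hsplit) (by positivity)
    refine lt_of_le_of_lt habs ?_
    have hterm1 : (1 / (t : ℝ)) * (t * (ε' / (2 * (M + 1)) * M)) < ε' / 2 := by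
      rw [← mul_assoc, one_div_mul_cancel htne, one_mul]
      have heq2 : ε' / (2 * (M + 1)) * M = ε' * M / (2 * (M + 1)) := by ring
      rw [heq2, div_lt_iff₀ (by positivity)]
      nlinarith
    have hterm2 : (1 / (t : ℝ)) * ((N : ℝ) * (2 * M)) ≤ ε' / 2 := by
      rw [div_mul_eq_mul_div, one_mul, div_le_iff₀ htR]
      have hcl : 4 * M * (N : ℝ) / ε' ≤ (Nat.ceil (4 * M * N / ε') : ℝ) := Nat.le_ceil _
      have hcl2 : ((Nat.ceil (4 * M * N / ε') + 1 : ℕ) : ℝ) ≤ t := by exact_mod_cast htc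
      push_cast at hcl2
      have h4 : 4 * M * (N : ℝ) / ε' < (t : ℝ) := by linarith
      rw [div_lt_iff₀ hε'] at h4
      nlinarith
    calc (1 / (t : ℝ)) * (t * (ε' / (2 * (M + 1)) * M) + N * (2 * M))
        = (1 / (t : ℝ)) * (t * (ε' / (2 * (M + 1)) * M))
          + (1 / (t : ℝ)) * ((N : ℝ) * (2 * M)) := by ring
      _ < ε' / 2 + ε' / 2 := by linarith
      _ = ε' := by ring
  have hDmeas : ∀ t, AEStronglyMeasurable (D t) ℙ := by
    intro t
    apply AEStronglyMeasurable.sub _ aestronglyMeasurable_const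
    apply AEStronglyMeasurable.const_mul
    exact (Finset.measurable_sum _ fun τ _ =>
      Finset.measurable_sum _ fun k _ => (hAmeas t τ i k).mul_const _).aestronglyMeasurable
  have hD0 : Filter.Tendsto (fun t => ℙ {ω | ε / 2 ≤ |D t ω|}) Filter.atTop (nhds 0) := by
    have hDtm : TendstoInMeasure ℙ D Filter.atTop (fun _ => (0 : ℝ)) :=
      tendstoInMeasure_of_tendsto_ae hDmeas hDae
    have := (tendstoInMeasure_iff_dist.mp hDtm) (ε / 2) (by positivity)
    simpa [Real.dist_eq] using this
  -- == combine ==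
  have hsub : ∀ t : ℕ, {ω | ε ≤ |(1 / (t : ℝ)) *
        (∑ τ ∈ Finset.range t, ∑ k, A t τ ω i k * Y k τ ω) - c|}
      ⊆ {ω | ε / 2 ≤ |Z t ω|} ∪ {ω | ε / 2 ≤ |D t ω|} := by
    intro t ω hω
    simp only [Set.mem_setOf_eq] at hω
    rw [Set.mem_union]
    by_contra h
    push_neg at h
    simp only [Set.mem_setOf_eq, not_le] at h
    rw [hdecomp t ω] at hω
    have := abs_add_le (Z t ω) (D t ω)
    linarith [h.1, h.2]
  have hsum0 : Filter.Tendsto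
      (fun t => ℙ {ω | ε / 2 ≤ |Z t ω|} + ℙ {ω | ε / 2 ≤ |D t ω|})
      Filter.atTop (nhds 0) := by
    simpa using hZ0.add hD0
  refine tendsto_of_tendsto_of_tendsto_of_le_of_le tendsto_const_nhds hsum0
    (fun t => zero_le) (fun t => ?_)
  exact (measure_mono (hsub t)).trans (measure_union_le _ _)
end

section
/- Let (Ω, F, P) be a probability space, m ≥ 2, let μ₀ ∈ ℝ^m lie in the probability simplex Δ_m with every entry strictly positive, and let Φ_t(j) : Ω → ℝ, for t ≥ 1 and j ∈ {1,…,m}, be random variables such that for each j, Φ_t(j) converges in probability to a constant c_j, where c_1 > c_j for every j ∈ {2,…,m}. Define the random Gibbs beliefs μ_t(j) = μ₀_j · exp(t·Φ_t(j)) / (Σ_{j'=1}^m μ₀_{j'} · exp(t·Φ_t(j'))). Then μ_t(1) → 1 in probability and μ_t(j) → 0 in probability for every j ∈ {2,…,m}; that is, the belief vector μ_t converges in probability to the standard basis vector e_1, so the estimator is weakly consistent. -/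
open MeasureTheory ProbabilityTheory

/-- If the random exponents `Φ_t(j)` converge in probability to constants
`c_j` with `c_1 > c_j` for every `j ≠ 1`, then the random Gibbs beliefs
`μ_t(j) = μ₀_j exp(t Φ_t(j)) / ∑_{j'} μ₀_{j'} exp(t Φ_t(j'))` converge in probability to
the standard basis vector `e_1`: `μ_t(1) → 1` and `μ_t(j) → 0` for `j ≠ 1` in probability
(state `1` is represented by the index `⟨0, _⟩ : Fin m`). -/
theorem gibbs_beliefs_weakly_consistent
    {Ω : Type*} [MeasureSpace Ω] [IsProbabilityMeasure (ℙ : Measure Ω)]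
    (m : ℕ) (hm : 2 ≤ m) (μ0 : Fin m → ℝ)
    (hμ0 : μ0 ∈ stdSimplex ℝ (Fin m)) (hμ0pos : ∀ j, 0 < μ0 j)
    (Φ : ℕ → Fin m → Ω → ℝ) (c : Fin m → ℝ)
    (hc : ∀ j : Fin m, j ≠ ⟨0, by omega⟩ → c j < c ⟨0, by omega⟩)
    (hΦconv : ∀ j : Fin m, ∀ ε > (0 : ℝ), Filter.Tendsto
      (fun t : ℕ => ℙ {ω | ε ≤ |Φ t j ω - c j|}) Filter.atTop (nhds 0))
    (μ : ℕ → Fin m → Ω → ℝ)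
    (hμ : ∀ t j ω, μ t j ω = μ0 j * Real.exp ((t : ℝ) * Φ t j ω) /
      ∑ j', μ0 j' * Real.exp ((t : ℝ) * Φ t j' ω)) :
    (∀ ε > (0 : ℝ), Filter.Tendsto
      (fun t : ℕ => ℙ {ω | ε ≤ |μ t ⟨0, by omega⟩ ω - 1|}) Filter.atTop (nhds 0)) ∧
      ∀ j : Fin m, j ≠ ⟨0, by omega⟩ → ∀ ε > (0 : ℝ), Filter.Tendsto
        (fun t : ℕ => ℙ {ω | ε ≤ |μ t j ω - 0|}) Filter.atTop (nhds 0) := by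
  have hμ0sum : ∑ j, μ0 j = 1 := hμ0.2
  have hμ0le : ∀ j, μ0 j ≤ 1 := by
    intro j
    rw [← hμ0sum]
    exact Finset.single_le_sum (fun i _ => (hμ0pos i).le) (Finset.mem_univ j)
  set i0 : Fin m := ⟨0, by omega⟩ with hi0
  haveI : Nonempty (Fin m) := ⟨i0⟩
  have hSne : (Finset.univ.erase i0).Nonempty :=
    ⟨⟨1, by omega⟩, Finset.mem_erase.mpr ⟨by simp [hi0, Fin.ext_iff], Finset.mem_univ _⟩⟩
  set M := (Finset.univ.erase i0).sup' hSne c with hMdef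
  have hM : M < c i0 := by
    rw [hMdef, Finset.sup'_lt_iff]
    intro j hj
    exact hc j (Finset.mem_erase.mp hj).1
  set g := c i0 - M with hgdef
  have hg : 0 < g := by rw [hgdef]; linarith
  set K := (m : ℝ) / μ0 i0 with hKdef
  have hm1 : (1 : ℝ) ≤ (m : ℝ) := by exact_mod_cast (by omega : 1 ≤ m)
  -- key pointwise bound on the good event
  have key : ∀ (t : ℕ) (ω : Ω), (∀ j', |Φ t j' ω - c j'| < g / 4) →
      ∀ j : Fin m, |μ t j ω - (if j = i0 then 1 else 0)|
        ≤ K * Real.exp (-(t : ℝ) * (g / 2)) := by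
    intro t ω hω j
    set D := ∑ j', μ0 j' * Real.exp ((t : ℝ) * Φ t j' ω) with hD
    have hterm : ∀ j' : Fin m, 0 < μ0 j' * Real.exp ((t : ℝ) * Φ t j' ω) :=
      fun j' => mul_pos (hμ0pos j') (Real.exp_pos _)
    have hDpos : 0 < D :=
      Finset.sum_pos (fun j' _ => hterm j') Finset.univ_nonempty
    have hle : ∀ j', μ0 j' * Real.exp ((t : ℝ) * Φ t j' ω) ≤ D :=
      fun j' => Finset.single_le_sum (fun i _ => (hterm i).le) (Finset.mem_univ j')
    have hnn : ∀ j', 0 ≤ μ t j' ω := fun j' => by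
      rw [hμ]; exact div_nonneg (hterm j').le hDpos.le
    have hle1 : ∀ j', μ t j' ω ≤ 1 := fun j' => by
      rw [hμ]; exact div_le_one_of_le₀ (hle j') hDpos.le
    have hbound : ∀ j', j' ≠ i0 →
        μ t j' ω ≤ (1 / μ0 i0) * Real.exp (-(t : ℝ) * (g / 2)) := by
      intro j' hj'
      have h1 : Φ t j' ω ≤ c j' + g / 4 := by
        have := (abs_lt.mp (hω j')).2; linarith
      have h0 : c i0 - g / 4 ≤ Φ t i0 ω := by
        have := (abs_lt.mp (hω i0)).1; linarith
      have hcj : c j' ≤ M :=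
        Finset.le_sup' c (Finset.mem_erase.mpr ⟨hj', Finset.mem_univ _⟩)
      have hΦdiff : (t : ℝ) * Φ t j' ω ≤ (t : ℝ) * Φ t i0 ω + -(t : ℝ) * (g / 2) := by
        have hd : Φ t j' ω ≤ Φ t i0 ω + -(g / 2) := by
          rw [hgdef] at *; linarith
        nlinarith [Nat.cast_nonneg (α := ℝ) t]
      rw [hμ t j' ω, div_le_iff₀ hDpos]
      calc μ0 j' * Real.exp ((t : ℝ) * Φ t j' ω)
          ≤ 1 * Real.exp ((t : ℝ) * Φ t j' ω) :=
            mul_le_mul_of_nonneg_right (hμ0le j') (Real.exp_pos _).le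
        _ = Real.exp ((t : ℝ) * Φ t j' ω) := one_mul _
        _ ≤ Real.exp ((t : ℝ) * Φ t i0 ω + -(t : ℝ) * (g / 2)) :=
            Real.exp_le_exp.mpr hΦdiff
        _ = 1 / μ0 i0 * Real.exp (-(t : ℝ) * (g / 2)) *
              (μ0 i0 * Real.exp ((t : ℝ) * Φ t i0 ω)) := by
            rw [Real.exp_add]
            field_simp [(hμ0pos i0).ne']
        _ ≤ 1 / μ0 i0 * Real.exp (-(t : ℝ) * (g / 2)) * D := by
            exact mul_le_mul_of_nonneg_left (hle i0)
              (mul_nonneg (one_div_nonneg.mpr (hμ0pos i0).le) (Real.exp_pos _).le)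
    by_cases hj : j = i0
    · subst hj
      rw [if_pos rfl]
      have hsum : ∑ j', μ t j' ω = 1 := by
        simp_rw [hμ]
        rw [← Finset.sum_div, ← hD, div_self hDpos.ne']
      have hsplit : μ t i0 ω + ∑ j' ∈ Finset.univ.erase i0, μ t j' ω = 1 := by
        have h := Finset.add_sum_erase Finset.univ (fun j' => μ t j' ω) (Finset.mem_univ i0)
        simpa [hsum] using h
      have habs : |μ t i0 ω - 1| = 1 - μ t i0 ω := by
        rw [abs_of_nonpos (by linarith [hle1 i0])]; ring
      rw [habs]
      have hsumle : ∑ j' ∈ Finset.univ.erase i0, μ t j' ω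
          ≤ ∑ _j' ∈ Finset.univ.erase i0, (1 / μ0 i0) * Real.exp (-(t : ℝ) * (g / 2)) :=
        Finset.sum_le_sum fun j' hj' => hbound j' (Finset.mem_erase.mp hj').1
      rw [Finset.sum_const, nsmul_eq_mul] at hsumle
      have hcard : ((Finset.univ.erase i0).card : ℝ) ≤ (m : ℝ) := by
        exact_mod_cast le_trans (Finset.card_erase_le) (by simp)
      have hx : (0 : ℝ) ≤ (1 / μ0 i0) * Real.exp (-(t : ℝ) * (g / 2)) :=
        mul_nonneg (one_div_nonneg.mpr (hμ0pos i0).le) (Real.exp_pos _).le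
      have : 1 - μ t i0 ω ≤ (m : ℝ) * ((1 / μ0 i0) * Real.exp (-(t : ℝ) * (g / 2))) := by
        nlinarith
      calc 1 - μ t i0 ω ≤ (m : ℝ) * ((1 / μ0 i0) * Real.exp (-(t : ℝ) * (g / 2))) := this
        _ = K * Real.exp (-(t : ℝ) * (g / 2)) := by
            rw [hKdef]; field_simp
    · simp only [if_neg hj]
      rw [sub_zero, abs_of_nonneg (hnn j)]
      calc μ t j ω ≤ (1 / μ0 i0) * Real.exp (-(t : ℝ) * (g / 2)) := hbound j hj
        _ ≤ K * Real.exp (-(t : ℝ) * (g / 2)) := by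
            apply mul_le_mul_of_nonneg_right _ (Real.exp_pos _).le
            rw [hKdef, div_le_div_iff₀ (hμ0pos i0) (hμ0pos i0)]
            nlinarith [hμ0pos i0]
  -- the exponential bound tends to 0
  have hexp : Filter.Tendsto (fun t : ℕ => K * Real.exp (-(t : ℝ) * (g / 2)))
      Filter.atTop (nhds 0) := by
    have h1 : Filter.Tendsto (fun t : ℕ => -(t : ℝ) * (g / 2)) Filter.atTop Filter.atBot := by
      have ha : Filter.Tendsto (fun t : ℕ => (t : ℝ) * (g / 2)) Filter.atTop Filter.atTop :=
        (tendsto_natCast_atTop_atTop (R := ℝ)).atTop_mul_const (half_pos hg)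
      have hb := Filter.tendsto_neg_atTop_atBot.comp ha
      refine hb.congr fun t => ?_
      simp [neg_mul]
    have h2 := (Real.tendsto_exp_atBot).comp h1
    have := h2.const_mul K
    simpa using this
  -- main convergence for each coordinate
  have main : ∀ j : Fin m, ∀ ε > (0 : ℝ), Filter.Tendsto
      (fun t : ℕ => ℙ {ω | ε ≤ |μ t j ω - (if j = i0 then 1 else 0)|})
      Filter.atTop (nhds 0) := by
    intro j ε hε
    have hub : Filter.Tendsto
        (fun t : ℕ => ∑ j' : Fin m, ℙ {ω | g / 4 ≤ |Φ t j' ω - c j'|})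
        Filter.atTop (nhds 0) := by
      have := tendsto_finset_sum (Finset.univ : Finset (Fin m))
        (fun j' _ => hΦconv j' (g / 4) (by positivity))
      simpa using this
    refine tendsto_of_tendsto_of_tendsto_of_le_of_le' tendsto_const_nhds hub
      (Filter.Eventually.of_forall fun t => zero_le) ?_
    have hev : ∀ᶠ t : ℕ in Filter.atTop, K * Real.exp (-(t : ℝ) * (g / 2)) < ε :=
      hexp.eventually (gt_mem_nhds hε)
    filter_upwards [hev] with t ht
    refine le_trans (measure_mono ?_) (measure_iUnion_fintype_le _ _)
    intro ω hω
    simp only [Set.mem_setOf_eq] at hω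
    by_contra hcon
    simp only [Set.mem_iUnion, Set.mem_setOf_eq, not_exists, not_le] at hcon
    have := key t ω hcon j
    linarith
  constructor
  · intro ε hε
    have := main i0 ε hε
    simpa using this
  · intro j hj ε hε
    have := main j ε hε
    rw [if_neg hj] at this
    exact this
end

section
/- Let m ≥ 1 and let μ₀ ∈ ℝ^m lie in the probability simplex Δ_m with every entry strictly positive. Then the Kullback–Leibler divergence ψ(x) = Σ_{j=1}^m x_j log(x_j/μ₀_j) is 1-strongly convex with respect to the ℓ₁-norm on Δ_m: for all x, y ∈ Δ_m and all λ ∈ [0,1], ψ(λx + (1-λ)y) ≤ λ·ψ(x) + (1-λ)·ψ(y) - (1/2)·λ·(1-λ)·‖x - y‖₁², where ‖z‖₁ = Σ_j |z_j|. -/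
open Real

lemma aux_G_mono : MonotoneOn (fun t : ℝ => (t+1)*Real.log t - 2*(t-1)) (Set.Ioi 0) := by
  have hD : ∀ t : ℝ, 0 < t → HasDerivAt (fun t : ℝ => (t+1)*Real.log t - 2*(t-1))
      (Real.log t + 1/t - 1) t := by
    intro t ht
    have h1 : HasDerivAt (fun t : ℝ => (t+1)*Real.log t)
        (1 * Real.log t + (t+1) * t⁻¹) t := by
      exact (((hasDerivAt_id t).add_const 1)).mul (Real.hasDerivAt_log ht.ne')
    have h2 : HasDerivAt (fun t : ℝ => 2*(t-1)) 2 t := by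
      simpa using ((hasDerivAt_id t).sub_const 1).const_mul 2
    have := h1.sub h2
    exact this.congr_deriv (by rw [add_mul, mul_inv_cancel₀ ht.ne']; ring)
  apply monotoneOn_of_deriv_nonneg (convex_Ioi 0)
  · intro t ht
    exact ((hD t ht).continuousAt).continuousWithinAt
  · intro t ht
    rw [interior_Ioi] at ht
    exact ((hD t ht).differentiableAt).differentiableWithinAt
  · intro t ht
    rw [interior_Ioi] at ht
    rw [(hD t ht).deriv]
    have hlog : 1 - 1/t ≤ Real.log t := by
      have ht' : (0:ℝ) < 1/t := by rw [one_div]; exact inv_pos.mpr ht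
      have := Real.log_le_sub_one_of_pos ht'
      rw [Real.log_div one_ne_zero ht.ne', Real.log_one] at this
      linarith
    linarith

lemma aux_key_ineq {t : ℝ} (ht : 0 < t) :
    3*(t-1)^2 ≤ (2*t+4)*(t*Real.log t - t + 1) := by
  set F : ℝ → ℝ := fun t => (2*t+4)*(t*Real.log t - t + 1) - 3*(t-1)^2 with hF
  have hD : ∀ s : ℝ, 0 < s → HasDerivAt F
      (4*((s+1)*Real.log s - 2*(s-1))) s := by
    intro s hs
    have h1 : HasDerivAt (fun u : ℝ => 2*u+4) 2 s := by
      simpa using ((hasDerivAt_id s).const_mul 2).add_const 4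
    have h2 : HasDerivAt (fun u : ℝ => u*Real.log u - u + 1)
        ((Real.log s + 1) - 1) s := by
      simpa using ((Real.hasDerivAt_mul_log hs.ne').sub (hasDerivAt_id s)).add_const 1
    have h3 : HasDerivAt (fun u : ℝ => 3*(u-1)^2) (3*(2*(s-1))) s := by
      have := (((hasDerivAt_id s).sub_const 1).pow 2).const_mul 3
      simpa using this
    have := ((h1.mul h2).sub h3)
    exact this.congr_deriv (by ring)
  have hF1 : F 1 = 0 := by simp [hF]
  have hmono : ∀ s : ℝ, 1 ≤ s → 0 ≤ F s := by
    intro s hs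
    have hM : MonotoneOn F (Set.Ici 1) := by
      apply monotoneOn_of_deriv_nonneg (convex_Ici 1)
      · intro u hu
        exact ((hD u (lt_of_lt_of_le one_pos hu)).continuousAt).continuousWithinAt
      · intro u hu
        rw [interior_Ici] at hu
        exact ((hD u (lt_trans one_pos hu)).differentiableAt).differentiableWithinAt
      · intro u hu
        rw [interior_Ici] at hu
        rw [(hD u (lt_trans one_pos hu)).deriv]
        have hG := aux_G_mono (Set.mem_Ioi.mpr one_pos)
          (Set.mem_Ioi.mpr (lt_trans one_pos hu)) hu.le
        simp only [Real.log_one] at hG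
        nlinarith [hG]
    have := hM (Set.mem_Ici.mpr le_rfl) (Set.mem_Ici.mpr hs) hs
    rw [hF1] at this
    exact this
  have hanti : ∀ s : ℝ, 0 < s → s ≤ 1 → 0 ≤ F s := by
    intro s hs hs1
    have hM : AntitoneOn F (Set.Ioc 0 1) := by
      apply antitoneOn_of_deriv_nonpos (convex_Ioc 0 1)
      · intro u hu
        exact ((hD u hu.1).continuousAt).continuousWithinAt
      · intro u hu
        rw [interior_Ioc] at hu
        exact ((hD u hu.1).differentiableAt).differentiableWithinAt
      · intro u hu
        rw [interior_Ioc] at hu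
        rw [(hD u hu.1).deriv]
        have hG := aux_G_mono (Set.mem_Ioi.mpr hu.1)
          (Set.mem_Ioi.mpr one_pos) hu.2.le
        simp only [Real.log_one] at hG
        nlinarith [hG]
    have := hM (Set.mem_Ioc.mpr ⟨hs, hs1⟩) (Set.mem_Ioc.mpr ⟨one_pos, le_rfl⟩) hs1
    rw [hF1] at this
    exact this
  rcases le_total 1 t with h | h
  · have := hmono t h; simp only [hF] at this; linarith
  · have := hanti t ht h; simp only [hF] at this; linarith

lemma aux_key_ineq' {p q : ℝ} (hp : 0 < p) (hq : 0 < q) :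
    3*(p-q)^2 ≤ (2*p+4*q)*(p*Real.log (p/q) - p + q) := by
  have ht : 0 < p/q := div_pos hp hq
  have h := aux_key_ineq ht
  have hq' : q ≠ 0 := hq.ne'
  calc 3*(p-q)^2 = (3*((p/q)-1)^2)*q^2 := by field_simp
    _ ≤ ((2*(p/q)+4)*((p/q)*Real.log (p/q)-(p/q)+1))*q^2 := by
        nlinarith [sq_nonneg q]
    _ = (2*p+4*q)*(p*Real.log (p/q)-p+q) := by field_simp

lemma aux_scalar_bound {p q : ℝ} (hp : 0 ≤ p) (hq : 0 ≤ q) (hsupp : q = 0 → p = 0) :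
    3*(p-q)^2/(2*p+4*q) ≤ p*Real.log (p/q) - p + q := by
  rcases eq_or_lt_of_le hq with hq0 | hq0
  · have hp0 := hsupp hq0.symm
    simp [hp0, ← hq0]
  rcases eq_or_lt_of_le hp with hp0 | hp0
  · rw [← hp0]
    have : 3*(0-q)^2/(2*0+4*q) = 3*q/4 := by
      field_simp
      ring
    rw [this]
    simp only [zero_mul, zero_sub, neg_zero, zero_add]
    linarith
  · have hden : (0:ℝ) < 2*p+4*q := by linarith
    rw [div_le_iff₀ hden]
    nlinarith [aux_key_ineq' hp0 hq0]

lemma aux_pinsker {m : ℕ} (x z : Fin m → ℝ) (hx : ∀ j, 0 ≤ x j) (hz : ∀ j, 0 ≤ z j)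
    (hsupp : ∀ j, z j = 0 → x j = 0)
    (hxs : ∑ j, x j = 1) (hzs : ∑ j, z j = 1) :
    (1/2) * (∑ j, |x j - z j|)^2 ≤ ∑ j, x j * Real.log (x j / z j) := by
  set w : Fin m → ℝ := fun j => 2*x j + 4*z j with hw
  have hw0 : ∀ j, 0 ≤ w j := fun j => by have := hx j; have := hz j; simp [hw]; linarith
  have hCS := Finset.sum_mul_sq_le_sq_mul_sq Finset.univ
    (fun j => |x j - z j| / Real.sqrt (w j)) (fun j => Real.sqrt (w j))
  have e1 : ∀ j : Fin m, |x j - z j| / Real.sqrt (w j) * Real.sqrt (w j) = |x j - z j| := by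
    intro j
    rcases eq_or_lt_of_le (hw0 j) with h0 | h0
    · have hxj : x j = 0 := by have := hx j; have := hz j; simp [hw] at h0; linarith
      have hzj : z j = 0 := by have := hx j; have := hz j; simp [hw] at h0; linarith
      simp [hxj, hzj]
    · exact div_mul_cancel₀ _ (Real.sqrt_ne_zero'.mpr h0)
  have e2 : ∀ j : Fin m, (|x j - z j| / Real.sqrt (w j))^2 = (x j - z j)^2 / w j := by
    intro j
    rw [div_pow, sq_abs, Real.sq_sqrt (hw0 j)]
  have e3 : ∀ j : Fin m, (Real.sqrt (w j))^2 = w j := fun j => Real.sq_sqrt (hw0 j)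
  simp only [e1, e2, e3] at hCS
  have hsumw : ∑ j, w j = 6 := by
    simp only [hw, Finset.sum_add_distrib, ← Finset.mul_sum, hxs, hzs]
    norm_num
  rw [hsumw] at hCS
  -- termwise bound
  have hterm : ∀ j ∈ Finset.univ, 3*(x j - z j)^2/(2*x j+4*z j) ≤
      x j * Real.log (x j / z j) - x j + z j :=
    fun j _ => aux_scalar_bound (hx j) (hz j) (hsupp j)
  have hsum := Finset.sum_le_sum hterm
  have hL : ∑ j, 3*(x j - z j)^2/(2*x j+4*z j) = 3 * ∑ j, (x j - z j)^2 / w j := by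
    rw [Finset.mul_sum]
    exact Finset.sum_congr rfl fun j _ => by rw [hw]; ring
  have hR : ∑ j, (x j * Real.log (x j / z j) - x j + z j)
      = ∑ j, x j * Real.log (x j / z j) := by
    rw [Finset.sum_add_distrib, Finset.sum_sub_distrib, hxs, hzs]
    ring
  rw [hL, hR] at hsum
  nlinarith [hCS, hsum]

lemma aux_log_split {a b c : ℝ} (ha : 0 ≤ a) (hb : 0 ≤ b) (hc : 0 < c)
    (hsupp : b = 0 → a = 0) :
    a * Real.log (a/c) = a * Real.log (a/b) + a * Real.log (b/c) := by
  rcases eq_or_lt_of_le ha with ha0 | ha0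
  · simp [← ha0]
  · have hb0 : 0 < b := by
      rcases eq_or_lt_of_le hb with h | h
      · exact absurd (hsupp h.symm) ha0.ne'
      · exact h
    have : a/c = (a/b) * (b/c) := by field_simp
    rw [this, Real.log_mul (by positivity) (by positivity), mul_add]



/-- The Kullback–Leibler divergence `ψ(x) = ∑ j, x j * log (x j / μ₀ j)`
from a strictly positive prior `μ₀` is 1-strongly convex with respect to the `ℓ₁`-norm on
the probability simplex: for all `x, y ∈ Δ_m` and `λ ∈ [0,1]`,
`ψ(λx + (1-λ)y) ≤ λ ψ(x) + (1-λ) ψ(y) - (1/2) λ (1-λ) ‖x - y‖₁²`. -/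
theorem kl_divergence_strongly_convex_l1
    (m : ℕ) (hm : 1 ≤ m) (μ0 : Fin m → ℝ)
    (hμ0 : μ0 ∈ stdSimplex ℝ (Fin m)) (hμ0pos : ∀ j, 0 < μ0 j)
    (ψ : (Fin m → ℝ) → ℝ)
    (hψ : ∀ x, ψ x = ∑ j, x j * Real.log (x j / μ0 j)) :
    ∀ x ∈ stdSimplex ℝ (Fin m), ∀ y ∈ stdSimplex ℝ (Fin m),
      ∀ l : ℝ, 0 ≤ l → l ≤ 1 →
        ψ (fun j => l * x j + (1 - l) * y j) ≤
          l * ψ x + (1 - l) * ψ y -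
            (1 / 2) * l * (1 - l) * (∑ j, |x j - y j|) ^ 2 := by
  intro x hx y hy l hl0 hl1
  rcases eq_or_lt_of_le hl0 with h0 | h0
  · rw [← h0]
    have he : (fun j => (0:ℝ) * x j + (1-0) * y j) = y := by funext j; ring
    rw [he]
    norm_num
  rcases eq_or_lt_of_le hl1 with h1 | h1
  · rw [h1]
    have he : (fun j => (1:ℝ) * x j + (1-1) * y j) = x := by funext j; ring
    rw [he]
    norm_num
  -- main case 0 < l < 1
  set z : Fin m → ℝ := fun j => l * x j + (1 - l) * y j with hzdef
  have hl1' : 0 < 1 - l := by linarith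
  have hz0 : ∀ j, 0 ≤ z j := fun j => by
    have := hx.1 j; have := hy.1 j
    simp only [hzdef]
    nlinarith
  have hzs : ∑ j, z j = 1 := by
    simp only [hzdef, Finset.sum_add_distrib, ← Finset.mul_sum, hx.2, hy.2]
    ring
  have hsx : ∀ j, z j = 0 → x j = 0 := by
    intro j hj
    have h1 : 0 ≤ l * x j := mul_nonneg h0.le (hx.1 j)
    have h2 : 0 ≤ (1-l) * y j := mul_nonneg hl1'.le (hy.1 j)
    simp only [hzdef] at hj
    have : l * x j = 0 := by linarith
    rcases mul_eq_zero.mp this with h | h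
    · exact absurd h h0.ne'
    · exact h
  have hsy : ∀ j, z j = 0 → y j = 0 := by
    intro j hj
    have h1 : 0 ≤ l * x j := mul_nonneg h0.le (hx.1 j)
    have h2 : 0 ≤ (1-l) * y j := mul_nonneg hl1'.le (hy.1 j)
    simp only [hzdef] at hj
    have : (1-l) * y j = 0 := by linarith
    rcases mul_eq_zero.mp this with h | h
    · exact absurd h hl1'.ne'
    · exact h
  have hX : ψ x = (∑ j, x j * Real.log (x j / z j)) + ∑ j, x j * Real.log (z j / μ0 j) := by
    rw [hψ, ← Finset.sum_add_distrib]
    exact Finset.sum_congr rfl fun j _ =>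
      aux_log_split (hx.1 j) (hz0 j) (hμ0pos j) (hsx j)
  have hY : ψ y = (∑ j, y j * Real.log (y j / z j)) + ∑ j, y j * Real.log (z j / μ0 j) := by
    rw [hψ, ← Finset.sum_add_distrib]
    exact Finset.sum_congr rfl fun j _ =>
      aux_log_split (hy.1 j) (hz0 j) (hμ0pos j) (hsy j)
  have hZ : ψ z = l * (∑ j, x j * Real.log (z j / μ0 j))
      + (1-l) * (∑ j, y j * Real.log (z j / μ0 j)) := by
    rw [hψ, Finset.mul_sum, Finset.mul_sum, ← Finset.sum_add_distrib]
    exact Finset.sum_congr rfl fun j _ => by simp only [hzdef]; ring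
  have hPx := aux_pinsker x z hx.1 hz0 hsx hx.2 hzs
  have hPy := aux_pinsker y z hy.1 hz0 hsy hy.2 hzs
  have hDx : ∑ j, |x j - z j| = (1-l) * ∑ j, |x j - y j| := by
    rw [Finset.mul_sum]
    refine Finset.sum_congr rfl fun j _ => ?_
    have : x j - z j = (1-l) * (x j - y j) := by simp only [hzdef]; ring
    rw [this, abs_mul, abs_of_nonneg hl1'.le]
  have hDy : ∑ j, |y j - z j| = l * ∑ j, |x j - y j| := by
    rw [Finset.mul_sum]
    refine Finset.sum_congr rfl fun j _ => ?_
    have : y j - z j = l * (y j - x j) := by simp only [hzdef]; ring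
    rw [this, abs_mul, abs_of_nonneg h0.le, abs_sub_comm]
  rw [hDx] at hPx
  rw [hDy] at hPy
  rw [hX, hY, hZ]
  have hmx := mul_le_mul_of_nonneg_left hPx h0.le
  have hmy := mul_le_mul_of_nonneg_left hPy hl1'.le
  nlinarith [hmx, hmy]
end
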